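/- Let X ⊂ ℝ^{2n} be a symplectically self-polar convex body (X = X^ω). Then the symplectic P-suspension P ⋉_ω X = {(v,x) ∈ P × ℝ^{2n} : |ω₂(u,v)| + ‖x‖_X ≤ 1} is a symplectically self-polar convex body in ℝ^{2n+2}, where P is the hexagon conv{±(1,1),±(1,0),±(0,1)} ⊂ ℝ², u = (1,1), and ω₂ is the standard area form on ℝ². -/

import Mathlib

open Set Topology Filter

/-- The standard symplectic form on ℝ^{2n} = (Fin n → ℝ) × (Fin n → ℝ). -/
noncomputable def symForm (n : ℕ) (x y : (Fin n → ℝ) × (Fin n → ℝ)) : ℝ :=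
  ∑ i, (x.1 i * y.2 i - x.2 i * y.1 i)

/-- The symplectic polar of a set in ℝ^{2n}. -/
def sPolar (n : ℕ) (X : Set ((Fin n → ℝ) × (Fin n → ℝ))) : Set ((Fin n → ℝ) × (Fin n → ℝ)) :=
  {y | ∀ x ∈ X, symForm n x y ≤ 1}

/-- The standard area (symplectic) form on ℝ². -/
noncomputable def omega2 (v w : ℝ × ℝ) : ℝ := v.1 * w.2 - v.2 * w.1

/-- The hexagon P = conv{±(1,1), ±(1,0), ±(0,1)}. -/
noncomputable def hexP : Set (ℝ × ℝ) :=
  convexHull ℝ {(1,1), (1,0), (0,1), (-1,-1), (-1,0), (0,-1)}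

/-- ℝ^{2n+2} = ℝ² × ℝ^{2n}. -/
abbrev Amb (n : ℕ) := (ℝ × ℝ) × ((Fin n → ℝ) × (Fin n → ℝ))

/-- The direct-sum symplectic form on ℝ² × ℝ^{2n}. -/
noncomputable def symFormS (n : ℕ) (p q : Amb n) : ℝ :=
  omega2 p.1 q.1 + symForm n p.2 q.2

/-- The symplectic polar of a set in ℝ² × ℝ^{2n}. -/
def sPolarS (n : ℕ) (S : Set (Amb n)) : Set (Amb n) :=
  {q | ∀ p ∈ S, symFormS n p q ≤ 1}

/-- The symplectic P-suspension of a centrally symmetric convex body X ⊂ ℝ^{2n}. -/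
noncomputable def susp (n : ℕ) (X : Set ((Fin n → ℝ) × (Fin n → ℝ))) : Set (Amb n) :=
  {p | p.1 ∈ hexP ∧ |omega2 (1,1) p.1| + gauge X p.2 ≤ 1}

-- ### bilinearity of symForm
lemma symForm_smul_left (n : ℕ) (a : ℝ) (x y : (Fin n → ℝ) × (Fin n → ℝ)) :
    symForm n (a • x) y = a * symForm n x y := by
  simp [symForm, Finset.mul_sum, mul_sub, mul_assoc]

lemma symForm_smul_right (n : ℕ) (a : ℝ) (x y : (Fin n → ℝ) × (Fin n → ℝ)) :
    symForm n x (a • y) = a * symForm n x y := by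
  simp only [symForm, Prod.smul_fst, Prod.smul_snd, Pi.smul_apply, smul_eq_mul,
    Finset.mul_sum]
  congr 1; ext i; ring

lemma symForm_zero_left (n : ℕ) (y : (Fin n → ℝ) × (Fin n → ℝ)) :
    symForm n 0 y = 0 := by simp [symForm]

-- ### the H-description of the hexagon
def Hset : Set (ℝ × ℝ) := {v | |v.1| ≤ 1 ∧ |v.2| ≤ 1 ∧ |v.1 - v.2| ≤ 1}

lemma convex_Hset : Convex ℝ Hset := by
  intro x hx y hy a b ha hb hab
  obtain ⟨h1, h2, h3⟩ := hx
  obtain ⟨k1, k2, k3⟩ := hy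
  obtain ⟨h1a, h1b⟩ := abs_le.1 h1
  obtain ⟨h2a, h2b⟩ := abs_le.1 h2
  obtain ⟨h3a, h3b⟩ := abs_le.1 h3
  obtain ⟨k1a, k1b⟩ := abs_le.1 k1
  obtain ⟨k2a, k2b⟩ := abs_le.1 k2
  obtain ⟨k3a, k3b⟩ := abs_le.1 k3
  refine ⟨?_, ?_, ?_⟩ <;>
  · simp only [Prod.smul_fst, Prod.smul_snd, Prod.fst_add, Prod.snd_add, smul_eq_mul]
    rw [abs_le]
    constructor <;> nlinarith

lemma hexP_subset_Hset : hexP ⊆ Hset := by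
  apply convexHull_min _ convex_Hset
  intro v hv
  simp only [mem_insert_iff, mem_singleton_iff] at hv
  rcases hv with h|h|h|h|h|h <;> subst h <;>
    refine ⟨by norm_num, by norm_num, by norm_num⟩

lemma comb3_mem {s : Set (ℝ × ℝ)} (hs : Convex ℝ s) {p1 p2 p3 : ℝ × ℝ}
    (h1 : p1 ∈ s) (h2 : p2 ∈ s) (h3 : p3 ∈ s) {c1 c2 c3 : ℝ}
    (hc1 : 0 ≤ c1) (hc2 : 0 ≤ c2) (hc3 : 0 ≤ c3) (hsum : c1 + c2 + c3 = 1) :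
    c1 • p1 + c2 • p2 + c3 • p3 ∈ s := by
  have := hs.sum_mem (t := Finset.univ) (w := ![c1, c2, c3]) (z := ![p1, p2, p3])
    (by intro i _; fin_cases i <;> simpa)
    (by simp [Fin.sum_univ_three, hsum])
    (by intro i _; fin_cases i <;> simpa)
  simpa [Fin.sum_univ_three] using this

lemma zero_mem_hexP : (0 : ℝ × ℝ) ∈ hexP := by
  have hc : Convex ℝ hexP := convex_convexHull ℝ _
  have h1 : ((1:ℝ),(1:ℝ)) ∈ hexP := subset_convexHull ℝ _ (by simp)
  have h2 : ((-1:ℝ),(-1:ℝ)) ∈ hexP := subset_convexHull ℝ _ (by simp)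
  have := hc h1 h2 (by norm_num : (0:ℝ) ≤ 1/2) (by norm_num : (0:ℝ) ≤ 1/2) (by norm_num)
  convert this using 1
  norm_num [Prod.ext_iff]

lemma Hset_subset_hexP : Hset ⊆ hexP := by
  rintro ⟨a, b⟩ ⟨h1, h2, h3⟩
  simp only at h1 h2 h3
  obtain ⟨h1a, h1b⟩ := abs_le.1 h1
  obtain ⟨h2a, h2b⟩ := abs_le.1 h2
  obtain ⟨h3a, h3b⟩ := abs_le.1 h3
  have hc : Convex ℝ hexP := convex_convexHull ℝ _
  have v11 : ((1:ℝ),(1:ℝ)) ∈ hexP := subset_convexHull ℝ _ (by simp)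
  have v10 : ((1:ℝ),(0:ℝ)) ∈ hexP := subset_convexHull ℝ _ (by simp)
  have v01 : ((0:ℝ),(1:ℝ)) ∈ hexP := subset_convexHull ℝ _ (by simp)
  have w11 : ((-1:ℝ),(-1:ℝ)) ∈ hexP := subset_convexHull ℝ _ (by simp)
  have w10 : ((-1:ℝ),(0:ℝ)) ∈ hexP := subset_convexHull ℝ _ (by simp)
  have w01 : ((0:ℝ),(-1:ℝ)) ∈ hexP := subset_convexHull ℝ _ (by simp)
  have z := zero_mem_hexP
  rcases le_or_gt 0 a with hA | hA <;> rcases le_or_gt 0 b with hB | hB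
  · rcases le_total b a with hba | hba
    · have := comb3_mem hc v10 v11 z (by linarith : (0:ℝ) ≤ a - b) hB
        (by linarith : (0:ℝ) ≤ 1 - a) (by ring)
      convert this using 1
      norm_num [Prod.ext_iff]
    · have := comb3_mem hc v01 v11 z (by linarith : (0:ℝ) ≤ b - a) hA
        (by linarith : (0:ℝ) ≤ 1 - b) (by ring)
      convert this using 1
      norm_num [Prod.ext_iff]
  · have := comb3_mem hc v10 w01 z hA (by linarith : (0:ℝ) ≤ -b)
      (by linarith : (0:ℝ) ≤ 1 - a + b) (by ring)
    convert this using 1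
    norm_num [Prod.ext_iff]
  · have := comb3_mem hc w10 v01 z (by linarith : (0:ℝ) ≤ -a) hB
      (by linarith : (0:ℝ) ≤ 1 + a - b) (by ring)
    convert this using 1
    norm_num [Prod.ext_iff]
    first
      | (constructor <;> ring)
      | ring
      | skip
  · rcases le_total a b with hab | hab
    · have := comb3_mem hc w10 w11 z (by linarith : (0:ℝ) ≤ b - a) (by linarith : (0:ℝ) ≤ -b)
        (by linarith : (0:ℝ) ≤ 1 + a) (by ring)
      convert this using 1
      norm_num [Prod.ext_iff]
      first
        | (constructor <;> ring)
        | ring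
        | skip
    · have := comb3_mem hc w01 w11 z (by linarith : (0:ℝ) ≤ a - b) (by linarith : (0:ℝ) ≤ -a)
        (by linarith : (0:ℝ) ≤ 1 + b) (by ring)
      convert this using 1
      norm_num [Prod.ext_iff]
      first
        | (constructor <;> ring)
        | ring
        | skip

lemma planarQ {v1 v2 w1 w2 : ℝ} (hv1 : |v1| ≤ 1) (hv2 : |v2| ≤ 1) (hv : |v1-v2| ≤ 1)
    (hw1 : |w1| ≤ 1) (hw2 : |w2| ≤ 1) (hw : |w1-w2| ≤ 1) :
    v1*w2 - v2*w1 + (1-|v1-v2|)*(1-|w1-w2|) ≤ 1 := by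
  rcases abs_cases (v1-v2) with ⟨hs, _⟩ | ⟨hs, _⟩ <;>
  rcases abs_cases (w1-w2) with ⟨ht, _⟩ | ⟨ht, _⟩ <;>
  rw [hs, ht] <;>
  rcases abs_le.1 hv1 with ⟨a1,a2⟩ <;> rcases abs_le.1 hv2 with ⟨b1,b2⟩ <;>
  rcases abs_le.1 hw1 with ⟨c1,c2⟩ <;> rcases abs_le.1 hw2 with ⟨d1,d2⟩ <;>
  rcases abs_le.1 hv with ⟨e1,e2⟩ <;> rcases abs_le.1 hw with ⟨f1,f2⟩ <;>
  nlinarith [mul_nonneg (sub_nonneg.2 a2) (sub_nonneg.2 d2), mul_nonneg (sub_nonneg.2 b2) (sub_nonneg.2 c2), mul_nonneg (sub_nonneg.2 (neg_le.1 a1)) (sub_nonneg.2 (neg_le.1 d1)), mul_nonneg (sub_nonneg.2 (neg_le.1 b1)) (sub_nonneg.2 (neg_le.1 c1))]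

section keys
variable {n : ℕ} {X : Set ((Fin n → ℝ) × (Fin n → ℝ))}

/-- forward bound: `ω(x,y) ≤ a b` when `gauge x ≤ a`, `gauge y ≤ b`. -/
lemma key1 (hconv : Convex ℝ X) (habs : Absorbent ℝ X)
    (h0X : (0 : (Fin n → ℝ) × (Fin n → ℝ)) ∈ X)
    (hself : X = sPolar n X)
    {x y : (Fin n → ℝ) × (Fin n → ℝ)} {a b : ℝ} (ha : 0 ≤ a) (hb : 0 ≤ b)
    (hx : gauge X x ≤ a) (hy : gauge X y ≤ b) :
    symForm n x y ≤ a * b := by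
  have step : ∀ δ : ℝ, 0 < δ → symForm n x y ≤ (a + δ) * (b + δ) := by
    intro δ hδ
    have haδ : 0 < a + δ := by linarith
    have hbδ : 0 < b + δ := by linarith
    set x' := (a + δ)⁻¹ • x with hx'
    set y' := (b + δ)⁻¹ • y with hy'
    have hgx' : gauge X x' < 1 := by
      rw [hx', gauge_smul_of_nonneg (inv_nonneg.2 haδ.le), smul_eq_mul]
      calc (a + δ)⁻¹ * gauge X x ≤ (a + δ)⁻¹ * a := by
            exact mul_le_mul_of_nonneg_left hx (inv_nonneg.2 haδ.le)
        _ < 1 := by rw [inv_mul_lt_iff₀ haδ]; linarith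
    have hgy' : gauge X y' < 1 := by
      rw [hy', gauge_smul_of_nonneg (inv_nonneg.2 hbδ.le), smul_eq_mul]
      calc (b + δ)⁻¹ * gauge X y ≤ (b + δ)⁻¹ * b := by
            exact mul_le_mul_of_nonneg_left hy (inv_nonneg.2 hbδ.le)
        _ < 1 := by rw [inv_mul_lt_iff₀ hbδ]; linarith
    have hx'X : x' ∈ X := gauge_lt_one_subset_self hconv h0X habs hgx'
    have hy'X : y' ∈ X := gauge_lt_one_subset_self hconv h0X habs hgy'
    have hy'P : y' ∈ sPolar n X := hself ▸ hy'X
    have hle : symForm n x' y' ≤ 1 := hy'P x' hx'X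
    have hxeq : x = (a + δ) • x' := by rw [hx', smul_inv_smul₀ haδ.ne']
    have hyeq : y = (b + δ) • y' := by rw [hy', smul_inv_smul₀ hbδ.ne']
    calc symForm n x y = (a + δ) * ((b + δ) * symForm n x' y') := by
          rw [hxeq, hyeq, symForm_smul_left, symForm_smul_right]
      _ ≤ (a + δ) * ((b + δ) * 1) := by
          apply mul_le_mul_of_nonneg_left _ haδ.le
          exact mul_le_mul_of_nonneg_left hle hbδ.le
      _ = (a + δ) * (b + δ) := by ring
  apply le_of_forall_pos_le_add
  intro ε hε
  have hd : 0 < ε / (a + b + 1) := by positivity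
  set δ := min 1 (ε / (a + b + 1)) with hδdef
  have hδ0 : 0 < δ := lt_min one_pos hd
  have h1 : δ ≤ 1 := min_le_left _ _
  have h2 : δ * (a + b + 1) ≤ ε := by
    have := min_le_right 1 (ε / (a + b + 1))
    rw [le_div_iff₀ (by positivity : (0:ℝ) < a + b + 1)] at this
    exact this
  have := step δ hδ0
  nlinarith

/-- reverse bound: if `ω(x,y) ≤ c` for all `x ∈ X` then `gauge y ≤ c`. -/
lemma key2 (hself : X = sPolar n X)
    {y : (Fin n → ℝ) × (Fin n → ℝ)} {c : ℝ} (hc : 0 ≤ c)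
    (h : ∀ x ∈ X, symForm n x y ≤ c) : gauge X y ≤ c := by
  apply le_of_forall_pos_le_add
  intro ε hε
  have hcε : 0 < c + ε := by linarith
  set y' := (c + ε)⁻¹ • y with hy'
  have hy'P : y' ∈ sPolar n X := by
    intro x hx
    rw [hy', symForm_smul_right]
    calc (c + ε)⁻¹ * symForm n x y ≤ (c + ε)⁻¹ * c :=
          mul_le_mul_of_nonneg_left (h x hx) (inv_nonneg.2 hcε.le)
      _ ≤ 1 := by rw [inv_mul_le_iff₀ hcε]; linarith
  have hy'X : y' ∈ X := hself ▸ hy'P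
  have : gauge X y' ≤ 1 := gauge_le_one_of_mem hy'X
  have hyeq : y = (c + ε) • y' := by rw [hy', smul_inv_smul₀ hcε.ne']
  rw [hyeq, gauge_smul_of_nonneg hcε.le, smul_eq_mul]
  calc (c + ε) * gauge X y' ≤ (c + ε) * 1 := mul_le_mul_of_nonneg_left this hcε.le
    _ = c + ε := by ring

end keys

theorem stmt4 (n : ℕ) (X : Set ((Fin n → ℝ) × (Fin n → ℝ)))
    (hconv : Convex ℝ X) (hcomp : IsCompact X) (hsym : ∀ x ∈ X, -x ∈ X)
    (h0 : (0 : (Fin n → ℝ) × (Fin n → ℝ)) ∈ interior X)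
    (hself : X = sPolar n X) :
    Convex ℝ (susp n X) ∧ IsCompact (susp n X) ∧ (∀ p ∈ susp n X, -p ∈ susp n X) ∧
      susp n X = sPolarS n (susp n X) := by
  have hnhds : X ∈ 𝓝 0 := mem_interior_iff_mem_nhds.1 h0
  have habs : Absorbent ℝ X := absorbent_nhds_zero hnhds
  have h0X : (0 : (Fin n → ℝ) × (Fin n → ℝ)) ∈ X := interior_subset h0
  have hXcl : IsClosed X := hcomp.isClosed
  have memX : ∀ z, gauge X z ≤ 1 ↔ z ∈ X := fun z => by
    rw [gauge_le_one_iff_mem_closure hconv hnhds, hXcl.closure_eq]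
  have hcP : Convex ℝ hexP := convex_convexHull ℝ _
  have homega : ∀ v : ℝ × ℝ, omega2 (1,1) v = v.2 - v.1 := fun v => by
    simp [omega2]
  -- Convexity
  have part1 : Convex ℝ (susp n X) := by
    rintro p ⟨hp1, hp2⟩ q ⟨hq1, hq2⟩ a b ha hb hab
    refine ⟨hcP hp1 hq1 ha hb hab, ?_⟩
    have e1 : (a • p + b • q).1 = a • p.1 + b • q.1 := rfl
    have e2 : (a • p + b • q).2 = a • p.2 + b • q.2 := rfl
    rw [e1, e2, homega]
    have habs1 : |(a • p.1 + b • q.1).2 - (a • p.1 + b • q.1).1|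
        ≤ a * |omega2 (1,1) p.1| + b * |omega2 (1,1) q.1| := by
      rw [homega, homega]
      have : (a • p.1 + b • q.1).2 - (a • p.1 + b • q.1).1
          = a * (p.1.2 - p.1.1) + b * (q.1.2 - q.1.1) := by
        simp only [Prod.smul_fst, Prod.smul_snd, Prod.fst_add, Prod.snd_add, smul_eq_mul]
        ring
      rw [this]
      calc |a * (p.1.2 - p.1.1) + b * (q.1.2 - q.1.1)|
          ≤ |a * (p.1.2 - p.1.1)| + |b * (q.1.2 - q.1.1)| := abs_add_le _ _
        _ = a * |p.1.2 - p.1.1| + b * |q.1.2 - q.1.1| := by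
            rw [abs_mul, abs_mul, abs_of_nonneg ha, abs_of_nonneg hb]
    have hg : gauge X (a • p.2 + b • q.2) ≤ a * gauge X p.2 + b * gauge X q.2 := by
      calc gauge X (a • p.2 + b • q.2) ≤ gauge X (a • p.2) + gauge X (b • q.2) :=
            gauge_add_le hconv habs _ _
        _ = a * gauge X p.2 + b * gauge X q.2 := by
            rw [gauge_smul_of_nonneg ha, gauge_smul_of_nonneg hb, smul_eq_mul, smul_eq_mul]
    nlinarith [hp2, hq2]
  -- Compactness
  have part2 : IsCompact (susp n X) := by
    have hPfin : (({(1,1), (1,0), (0,1), (-1,-1), (-1,0), (0,-1)} : Set (ℝ × ℝ))).Finite :=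
      Set.toFinite _
    have hPcomp : IsCompact hexP := hPfin.isCompact_convexHull ℝ
    have hsub : susp n X ⊆ hexP ×ˢ X := by
      rintro p ⟨hp1, hp2⟩
      refine ⟨hp1, (memX p.2).1 ?_⟩
      have := abs_nonneg (omega2 (1,1) p.1)
      linarith
    have hclosed : IsClosed (susp n X) := by
      have h1 : IsClosed {p : Amb n | p.1 ∈ hexP} :=
        hPcomp.isClosed.preimage continuous_fst
      have hcont : Continuous (fun p : Amb n => |omega2 (1,1) p.1| + gauge X p.2) := by
        apply Continuous.add
        · have : Continuous (fun p : Amb n => omega2 (1,1) p.1) := by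
            simp only [homega]
            fun_prop
          exact this.abs
        · exact (continuous_gauge hconv hnhds).comp continuous_snd
      have h2 : IsClosed {p : Amb n | |omega2 (1,1) p.1| + gauge X p.2 ≤ 1} :=
        isClosed_le hcont continuous_const
      exact h1.inter h2
    exact (hPcomp.prod hcomp).of_isClosed_subset hclosed hsub
  -- Symmetry
  have part3 : ∀ p ∈ susp n X, -p ∈ susp n X := by
    rintro p ⟨hp1, hp2⟩
    have hH := hexP_subset_Hset hp1
    refine ⟨Hset_subset_hexP ⟨?_, ?_, ?_⟩, ?_⟩
    · show |(-p).1.1| ≤ 1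
      rw [show (-p).1.1 = -p.1.1 from rfl, abs_neg]; exact hH.1
    · show |(-p).1.2| ≤ 1
      rw [show (-p).1.2 = -p.1.2 from rfl, abs_neg]; exact hH.2.1
    · show |(-p).1.1 - (-p).1.2| ≤ 1
      rw [show (-p).1.1 - (-p).1.2 = -(p.1.1 - p.1.2) from by
        show -p.1.1 - -p.1.2 = _; ring, abs_neg]
      exact hH.2.2
    · have e1 : |omega2 (1,1) (-p).1| = |omega2 (1,1) p.1| := by
        rw [homega, homega, show (-p).1.2 - (-p).1.1 = -(p.1.2 - p.1.1) from by
          show -p.1.2 - -p.1.1 = _; ring, abs_neg]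
      have e2 : gauge X (-p).2 = gauge X p.2 := gauge_neg hsym p.2
      rw [e1, e2]; exact hp2
  refine ⟨part1, part2, part3, ?_⟩
  -- Self-polarity
  ext q
  constructor
  · rintro ⟨hq1, hq2⟩ p ⟨hp1, hp2⟩
    have hvH := hexP_subset_Hset hp1
    have hwH := hexP_subset_Hset hq1
    have gx0 : (0:ℝ) ≤ gauge X p.2 := gauge_nonneg _
    have gy0 : (0:ℝ) ≤ gauge X q.2 := gauge_nonneg _
    have ha : (0:ℝ) ≤ 1 - |omega2 (1,1) p.1| := by linarith
    have hb : (0:ℝ) ≤ 1 - |omega2 (1,1) q.1| := by linarith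
    have hxy : symForm n p.2 q.2 ≤ (1 - |omega2 (1,1) p.1|) * (1 - |omega2 (1,1) q.1|) :=
      key1 hconv habs h0X hself ha hb (by linarith) (by linarith)
    have hdv : |omega2 (1,1) p.1| = |p.1.1 - p.1.2| := by rw [homega, abs_sub_comm]
    have hdw : |omega2 (1,1) q.1| = |q.1.1 - q.1.2| := by rw [homega, abs_sub_comm]
    have hQ := planarQ hvH.1 hvH.2.1 hvH.2.2 hwH.1 hwH.2.1 hwH.2.2
    show omega2 p.1 q.1 + symForm n p.2 q.2 ≤ 1
    rw [hdv, hdw] at hxy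
    have : omega2 p.1 q.1 = p.1.1 * q.1.2 - p.1.2 * q.1.1 := rfl
    linarith [hxy, hQ]
  · intro hq
    have memv : ∀ v : ℝ × ℝ,
        v ∈ ({(1,1), (1,0), (0,1), (-1,-1), (-1,0), (0,-1)} : Set (ℝ × ℝ)) →
        |omega2 (1,1) v| ≤ 1 → ((v, 0) : Amb n) ∈ susp n X := by
      intro v hv h1
      exact ⟨subset_convexHull ℝ _ hv, by rw [gauge_zero]; linarith⟩
    have inst : ∀ v : ℝ × ℝ,
        v ∈ ({(1,1), (1,0), (0,1), (-1,-1), (-1,0), (0,-1)} : Set (ℝ × ℝ)) →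
        |omega2 (1,1) v| ≤ 1 → omega2 v q.1 ≤ 1 := by
      intro v hv h1
      have := hq ((v, 0) : Amb n) (memv v hv h1)
      simpa [symFormS, symForm_zero_left] using this
    have i1 : q.1.2 - q.1.1 ≤ 1 := by
      have := inst (1,1) (by simp) (by norm_num [omega2])
      simpa [omega2] using by linarith [show (1:ℝ) * q.1.2 - 1 * q.1.1 ≤ 1 from this]
    have i2 : q.1.1 - q.1.2 ≤ 1 := by
      have := inst (-1,-1) (by simp) (by norm_num [omega2])
      have : (-1:ℝ) * q.1.2 - (-1) * q.1.1 ≤ 1 := this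
      linarith
    have i3 : q.1.2 ≤ 1 := by
      have := inst (1,0) (by simp) (by norm_num [omega2])
      have : (1:ℝ) * q.1.2 - 0 * q.1.1 ≤ 1 := this
      linarith
    have i4 : -q.1.2 ≤ 1 := by
      have := inst (-1,0) (by simp) (by norm_num [omega2])
      have : (-1:ℝ) * q.1.2 - 0 * q.1.1 ≤ 1 := this
      linarith
    have i5 : -q.1.1 ≤ 1 := by
      have := inst (0,1) (by simp) (by norm_num [omega2])
      have : (0:ℝ) * q.1.2 - 1 * q.1.1 ≤ 1 := this
      linarith
    have i6 : q.1.1 ≤ 1 := by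
      have := inst (0,-1) (by simp) (by norm_num [omega2])
      have : (0:ℝ) * q.1.2 - (-1) * q.1.1 ≤ 1 := this
      linarith
    have hwH : q.1 ∈ Hset := ⟨abs_le.2 ⟨by linarith, i6⟩, abs_le.2 ⟨by linarith, i3⟩,
      abs_le.2 ⟨by linarith, i2⟩⟩
    have habsw : |omega2 (1,1) q.1| ≤ 1 := by
      rw [homega]; exact abs_le.2 ⟨by linarith, i1⟩
    refine ⟨Hset_subset_hexP hwH, ?_⟩
    have hgy : gauge X q.2 ≤ 1 - |omega2 (1,1) q.1| := by
      apply key2 hself (by linarith)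
      intro x hx
      have hgx : gauge X x ≤ 1 := gauge_le_one_of_mem hx
      have m1 : (((1,1), x) : Amb n) ∈ susp n X :=
        ⟨subset_convexHull ℝ _ (by simp), by norm_num [omega2]; linarith⟩
      have m2 : (((-1,-1), x) : Amb n) ∈ susp n X :=
        ⟨subset_convexHull ℝ _ (by simp), by norm_num [omega2]; linarith⟩
      have c1 := hq _ m1
      have c2 := hq _ m2
      have c1' : (q.1.2 - q.1.1) + symForm n x q.2 ≤ 1 := by
        have : (1:ℝ) * q.1.2 - 1 * q.1.1 + symForm n x q.2 ≤ 1 := c1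
        linarith
      have c2' : (q.1.1 - q.1.2) + symForm n x q.2 ≤ 1 := by
        have : (-1:ℝ) * q.1.2 - (-1) * q.1.1 + symForm n x q.2 ≤ 1 := c2
        linarith
      have : |omega2 (1,1) q.1| ≤ 1 - symForm n x q.2 := by
        rw [homega]
        exact abs_le.2 ⟨by linarith, by linarith⟩
      linarith
    linarith
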